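/- Let I be a finite index set and S = {(x_i, g_i, f_i)}_{i ∈ I} ⊂ ℝ^d × ℝ^d × ℝ. If there exists a function f ∈ F^coord_{0,L}(ℝ^d) with ∇f(x_i) = g_i and f(x_i) = f_i for all i ∈ I (i.e., S is F^coord_{0,L}(ℝ^d)-interpolable), then for all i, j ∈ I and every block ℓ ∈ {1,…,p}: f_i ≥ f_j + Σ_{s=1}^p ⟨g_j^{(s)}, x_i^{(s)} − x_j^{(s)}⟩ + (1/(2L_ℓ))‖g_i^{(ℓ)} − g_j^{(ℓ)}‖². -/

import Mathlib

open RealInnerProductSpace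

noncomputable section

/-- The `ℓ`-th block `ℝ^{d_ℓ}` of the decomposition `ℝ^d = ℝ^{d_1} × … × ℝ^{d_p}`. -/
abbrev Blk {p : ℕ} (d : Fin p → ℕ) (ℓ : Fin p) : Type := EuclideanSpace ℝ (Fin (d ℓ))

/-- The space `ℝ^d = ℝ^{d_1} × … × ℝ^{d_p}` with the Euclidean (ℓ²) norm. -/
abbrev Sp {p : ℕ} (d : Fin p → ℕ) : Type := PiLp 2 (Blk d)

/-- The selection embedding `U_ℓ : ℝ^{d_ℓ} → ℝ^d` placing `h` in block `ℓ` and `0` elsewhere. -/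
def inj {p : ℕ} (d : Fin p → ℕ) (ℓ : Fin p) (h : Blk d ℓ) : Sp d :=
  (WithLp.equiv 2 (∀ ℓ, Blk d ℓ)).symm (Pi.single ℓ h)

/-- Membership in the class `F^coord_{0,L}(ℝ^d)`: convex, differentiable, and for each block
`ℓ` the partial gradient `∇^{(ℓ)} f` is `L_ℓ`-Lipschitz along the block `ℓ`. -/
def IsCoordSmooth {p : ℕ} (d : Fin p → ℕ) (L : Fin p → ℝ) (f : Sp d → ℝ) : Prop :=
  ConvexOn ℝ Set.univ f ∧ Differentiable ℝ f ∧
    ∀ (ℓ : Fin p) (x : Sp d) (h : Blk d ℓ),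
      ‖gradient f (x + inj d ℓ h) ℓ - gradient f x ℓ‖ ≤ L ℓ * ‖h‖

variable {p : ℕ} {d : Fin p → ℕ}

lemma inner_inj (v : Sp d) (ℓ : Fin p) (h : Blk d ℓ) : ⟪v, inj d ℓ h⟫ = ⟪v ℓ, h⟫ := by
  rw [PiLp.inner_apply]
  rw [Finset.sum_eq_single ℓ]
  · simp [inj]
  · intro s _ hs
    simp [inj, Pi.single_eq_of_ne hs]
  · simp

lemma inj_smul (ℓ : Fin p) (t : ℝ) (h : Blk d ℓ) : inj d ℓ (t • h) = t • inj d ℓ h := by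
  ext s
  simp [inj, Pi.single_smul]

lemma fderiv_apply_eq (f : Sp d → ℝ) (z v : Sp d) : fderiv ℝ f z v = ⟪gradient f z, v⟫ := by
  rw [gradient, InnerProductSpace.toDual_symm_apply]

lemma hasDerivAt_line (f : Sp d → ℝ) (hf : Differentiable ℝ f) (a v : Sp d) (t : ℝ) :
    HasDerivAt (fun t : ℝ => f (a + t • v)) ⟪gradient f (a + t • v), v⟫ t := by
  have h1 : HasDerivAt (fun t : ℝ => a + t • v) v t := by
    simpa using ((hasDerivAt_id t).smul_const v).const_add a
  have h2 := (hf (a + t • v)).hasFDerivAt.comp_hasDerivAt t h1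
  have : fderiv ℝ f (a + t • v) v = ⟪gradient f (a + t • v), v⟫ := fderiv_apply_eq f _ v
  rw [← this]; exact h2

lemma convex_lower (f : Sp d → ℝ) (hc : ConvexOn ℝ Set.univ f) (hf : Differentiable ℝ f)
    (a b : Sp d) : f a + ⟪gradient f a, b - a⟫ ≤ f b := by
  set φ : ℝ → ℝ := fun t => f (a + t • (b - a)) with hφ
  have hconv : ConvexOn ℝ Set.univ φ := by
    have := hc.comp_affineMap (AffineMap.lineMap a b : ℝ →ᵃ[ℝ] Sp d)
    have heq : φ = f ∘ (AffineMap.lineMap a b : ℝ →ᵃ[ℝ] Sp d) := by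
      funext t
      simp [hφ, AffineMap.lineMap_apply, Function.comp]
      rw [add_comm]
    rw [heq]
    simpa using this
  have hder := hasDerivAt_line f hf a (b - a) 0
  have hslope := hconv.le_slope_of_hasDerivAt (Set.mem_univ 0) (Set.mem_univ 1) zero_lt_one
    (by simpa using hder)
  have : slope φ 0 1 = f b - f a := by
    simp [slope, hφ]
  rw [this] at hslope
  simpa using by linarith [hslope]

lemma descent (f : Sp d → ℝ) (L : Fin p → ℝ) (hf : Differentiable ℝ f)
    (hlip : ∀ (ℓ : Fin p) (x : Sp d) (h : Blk d ℓ),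
      ‖gradient f (x + inj d ℓ h) ℓ - gradient f x ℓ‖ ≤ L ℓ * ‖h‖)
    (ℓ : Fin p) (x : Sp d) (h : Blk d ℓ) :
    f (x + inj d ℓ h) ≤ f x + ⟪gradient f x ℓ, h⟫ + L ℓ / 2 * ‖h‖ ^ 2 := by
  set v : Sp d := inj d ℓ h with hv
  set K : ℝ := ⟪gradient f x ℓ, h⟫ with hK
  set c : ℝ := L ℓ * ‖h‖ ^ 2 with hc
  set ψ : ℝ → ℝ := fun t => f (x + t • v) - t * K - c * t ^ 2 / 2 with hψ
  have hder : ∀ t : ℝ, HasDerivAt ψ (⟪gradient f (x + t • v), v⟫ - K - c * t) t := by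
    intro t
    have h1 := hasDerivAt_line f hf x v t
    have h2 : HasDerivAt (fun t : ℝ => t * K) K t := by
      simpa using (hasDerivAt_id t).mul_const K
    have h3 : HasDerivAt (fun t : ℝ => c * t ^ 2 / 2) (c * t) t := by
      have := ((hasDerivAt_pow 2 t).const_mul c).div_const 2
      simpa using this.congr_deriv (by ring)
    exact (h1.sub h2).sub h3
  have hbound : ∀ t : ℝ, 0 ≤ t → ⟪gradient f (x + t • v), v⟫ - K - c * t ≤ 0 := by
    intro t ht
    have hxv : x + t • v = x + inj d ℓ (t • h) := by rw [hv, inj_smul]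
    have hinner : ⟪gradient f (x + t • v), v⟫ = ⟪gradient f (x + t • v) ℓ, h⟫ := inner_inj _ ℓ h
    have hdiff : ⟪gradient f (x + t • v) ℓ - gradient f x ℓ, h⟫ ≤ c * t := by
      calc ⟪gradient f (x + t • v) ℓ - gradient f x ℓ, h⟫
          ≤ ‖gradient f (x + t • v) ℓ - gradient f x ℓ‖ * ‖h‖ := real_inner_le_norm _ _
        _ ≤ (L ℓ * ‖t • h‖) * ‖h‖ := by
            apply mul_le_mul_of_nonneg_right _ (norm_nonneg h)
            rw [hxv]; exact hlip ℓ x (t • h)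
        _ = c * t := by
            rw [norm_smul, Real.norm_eq_abs, abs_of_nonneg ht, hc]; ring
    rw [hinner, hK]
    have : ⟪gradient f (x + t • v) ℓ, h⟫ - ⟪gradient f x ℓ, h⟫
        = ⟪gradient f (x + t • v) ℓ - gradient f x ℓ, h⟫ := (inner_sub_left _ _ _).symm
    linarith [this ▸ hdiff]
  have hanti : AntitoneOn ψ (Set.Icc (0:ℝ) 1) := by
    apply antitoneOn_of_deriv_nonpos (convex_Icc 0 1)
    · exact fun t _ => ((hder t).differentiableAt).continuousAt.continuousWithinAt
    · exact fun t _ => ((hder t).differentiableAt).differentiableWithinAt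
    · intro t ht
      rw [interior_Icc] at ht
      rw [(hder t).deriv]
      exact hbound t (le_of_lt ht.1)
  have h01 := hanti (Set.left_mem_Icc.2 zero_le_one) (Set.right_mem_Icc.2 zero_le_one) zero_le_one
  simp only [hψ, zero_smul, add_zero, one_smul, zero_mul, mul_zero] at h01
  have : f (x + v) - K - c / 2 ≤ f x := by
    simpa using h01
  rw [hv, hK, hc] at this
  linarith

theorem necessary_interpolation_conditions'
    {I : Type*} [Finite I] (L : Fin p → ℝ) (hL : ∀ ℓ, 0 < L ℓ)
    (x g : I → Sp d) (F : I → ℝ)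
    (hinterp : ∃ f : Sp d → ℝ, (ConvexOn ℝ Set.univ f ∧ Differentiable ℝ f ∧
    ∀ (ℓ : Fin p) (x : Sp d) (h : Blk d ℓ),
      ‖gradient f (x + inj d ℓ h) ℓ - gradient f x ℓ‖ ≤ L ℓ * ‖h‖) ∧
      ∀ i, gradient f (x i) = g i ∧ f (x i) = F i) :
    ∀ (i j : I) (ℓ : Fin p),
      F i ≥ F j + (∑ s : Fin p, ⟪g j s, x i s - x j s⟫)
        + 1 / (2 * L ℓ) * ‖g i ℓ - g j ℓ‖ ^ 2 := by
  obtain ⟨f, ⟨hconv, hdiff, hlip⟩, hfit⟩ := hinterp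
  intro i j ℓ
  have hLpos := hL ℓ
  set w : Blk d ℓ := g j ℓ - g i ℓ with hw
  set v : Blk d ℓ := (L ℓ)⁻¹ • w with hv
  have hB := descent f L hdiff hlip ℓ (x i) v
  have hC := convex_lower f hconv hdiff (x j) (x i + inj d ℓ v)
  rw [(hfit i).1, (hfit i).2] at hB
  rw [(hfit j).1, (hfit j).2] at hC
  -- expand the inner product in hC
  have hrearr : x i + inj d ℓ v - x j = (x i - x j) + inj d ℓ v := by abel
  rw [hrearr, inner_add_right, inner_inj] at hC
  have hsum : ⟪g j, x i - x j⟫ = ∑ s : Fin p, ⟪g j s, x i s - x j s⟫ := by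
    rw [PiLp.inner_apply]; rfl
  rw [hsum] at hC
  set S : ℝ := ∑ s : Fin p, ⟪g j s, x i s - x j s⟫
  set n : ℝ := ‖w‖ with hn
  have h1 : ⟪g j ℓ, v⟫ - ⟪g i ℓ, v⟫ = (L ℓ)⁻¹ * n ^ 2 := by
    rw [← inner_sub_left, ← hw, hv, real_inner_smul_right, real_inner_self_eq_norm_sq]
  have h2 : ‖v‖ ^ 2 = (L ℓ)⁻¹ ^ 2 * n ^ 2 := by
    rw [hv, norm_smul, Real.norm_eq_abs, abs_of_pos (inv_pos.2 hLpos), mul_pow]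
  have h3 : ‖g i ℓ - g j ℓ‖ = n := by rw [hn, hw, norm_sub_rev]
  rw [h3]
  rw [h2] at hB
  have key : F j + S + (L ℓ)⁻¹ * n ^ 2 - L ℓ / 2 * ((L ℓ)⁻¹ ^ 2 * n ^ 2) ≤ F i := by
    linarith
  have harith : (L ℓ)⁻¹ * n ^ 2 - L ℓ / 2 * ((L ℓ)⁻¹ ^ 2 * n ^ 2) = 1 / (2 * L ℓ) * n ^ 2 := by
    field_simp
    ring
  linarith [key, harith]

theorem necessary_interpolation_conditions {p : ℕ} {d : Fin p → ℕ}
    (L : Fin p → ℝ) (hL : ∀ ℓ, 0 < L ℓ) {I : Type*} [Finite I]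
    (x g : I → Sp d) (F : I → ℝ)
    (hinterp : ∃ f : Sp d → ℝ, IsCoordSmooth d L f ∧
      ∀ i, gradient f (x i) = g i ∧ f (x i) = F i) :
    ∀ (i j : I) (ℓ : Fin p),
      F i ≥ F j + (∑ s : Fin p, ⟪g j s, x i s - x j s⟫)
        + 1 / (2 * L ℓ) * ‖g i ℓ - g j ℓ‖ ^ 2 := by
  exact necessary_interpolation_conditions' L hL x g F hinterp
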